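/- Along any admissible trajectory of the reduced dynamics, the weighted mean m(t) = r s₁(t) + (1-r) s₂(t) is nonincreasing; consequently m(t) ≤ m(0) for all t ≥ 0 and trajectories are bounded. -/

import Mathlib

open Topology Filter Set

/-- Auxiliary: a function positive on [0,T), zero at T>0, cannot have positive derivative at T. -/
lemma aux_left_pos (f : ℝ → ℝ) (T c : ℝ) (hT : 0 < T) (hdf : HasDerivAt f c T)
    (hc : 0 < c) (hfT : f T = 0) (hpos : ∀ x ∈ Set.Ico 0 T, 0 < f x) : False := by
  rw [hasDerivAt_iff_tendsto_slope] at hdf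
  have h1 : ∀ᶠ x in 𝓝[≠] T, 0 < slope f T x := hdf.eventually (eventually_gt_nhds hc)
  have h2 : ∀ᶠ x in 𝓝[<] T, 0 < slope f T x :=
    nhdsWithin_mono T (fun x hx => (ne_of_lt hx : x ≠ T)) h1
  have h3 : Set.Ioo 0 T ∈ 𝓝[<] T := Ioo_mem_nhdsLT_of_mem ⟨hT, le_refl T⟩
  obtain ⟨x, hx1, hx2⟩ := (h2.and (Filter.eventually_of_mem h3 (fun x hx => hx))).exists
  have hxT : x < T := hx2.2
  have hfx : 0 < f x := hpos x ⟨le_of_lt hx2.1, hxT⟩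
  have hsl : slope f T x = (f x) / (x - T) := by
    simp [slope_def_field, hfT]
  rw [hsl] at hx1
  have hneg : x - T < 0 := by linarith
  have := div_neg_of_pos_of_neg hfx hneg
  linarith

/-- Along any admissible trajectory, m = r s₁ + (1-r) s₂ is nonincreasing, m(t) ≤ m(0),
    and trajectories are bounded. -/
theorem stmt5 (μ : ℝ → ℝ)
    (hmono : MonotoneOn μ (Set.Ici 0)) (h0 : μ 0 = 0)
    (r d : ℝ) (hr : r ∈ Set.Ioo (0:ℝ) 1) (hd : 0 ≤ d)
    (s₁ s₂ a sst : ℝ → ℝ)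
    (ha : ∀ t ≥ (0:ℝ), a t ∈ Set.Icc (0:ℝ) 1)
    (hsst : ∀ t ≥ (0:ℝ), sst t ∈ Set.Icc 0 (a t * s₁ t + (1 - a t) * s₂ t))
    (hode1 : ∀ t ≥ (0:ℝ), HasDerivAt s₁
      (a t / r * (μ (sst t) * (sst t - s₁ t)) + d / r * (s₂ t - s₁ t)) t)
    (hode2 : ∀ t ≥ (0:ℝ), HasDerivAt s₂
      ((1 - a t) / (1 - r) * (μ (sst t) * (sst t - s₂ t)) + d / (1 - r) * (s₁ t - s₂ t)) t)
    (hinit : 0 ≤ s₁ 0 ∧ 0 ≤ s₂ 0) :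
    AntitoneOn (fun t => r * s₁ t + (1 - r) * s₂ t) (Set.Ici 0) ∧
    (∀ t ≥ (0:ℝ), r * s₁ t + (1 - r) * s₂ t ≤ r * s₁ 0 + (1 - r) * s₂ 0) ∧
    ∃ M : ℝ, ∀ t ≥ (0:ℝ), |s₁ t| ≤ M ∧ |s₂ t| ≤ M := by
  obtain ⟨hr0, hr1⟩ := hr
  have hr1' : (0:ℝ) < 1 - r := by linarith
  -- μ(sst t) ≥ 0
  have hμ : ∀ t ≥ (0:ℝ), 0 ≤ μ (sst t) := by
    intro t ht
    have h := (hsst t ht).1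
    have := hmono Set.self_mem_Ici (Set.mem_Ici.mpr h) h
    rwa [h0] at this
  -- derivative of m
  have hm : ∀ t ≥ (0:ℝ), HasDerivAt (fun t => r * s₁ t + (1 - r) * s₂ t)
      (μ (sst t) * (sst t - (a t * s₁ t + (1 - a t) * s₂ t))) t := by
    intro t ht
    have h := ((hode1 t ht).const_mul r).add ((hode2 t ht).const_mul (1 - r))
    refine h.congr_deriv ?_
    field_simp
    ring
  have hm_nonpos : ∀ t ≥ (0:ℝ),
      μ (sst t) * (sst t - (a t * s₁ t + (1 - a t) * s₂ t)) ≤ 0 := by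
    intro t ht
    have h := (hsst t ht).2
    have := hμ t ht
    nlinarith
  -- continuity
  have hc1 : ContinuousOn s₁ (Set.Ici 0) :=
    fun t ht => (hode1 t ht).continuousAt.continuousWithinAt
  have hc2 : ContinuousOn s₂ (Set.Ici 0) :=
    fun t ht => (hode2 t ht).continuousAt.continuousWithinAt
  have hcm : ContinuousOn (fun t => r * s₁ t + (1 - r) * s₂ t) (Set.Ici 0) :=
    (continuousOn_const.mul hc1).add (continuousOn_const.mul hc2)
  -- antitone
  have hanti : AntitoneOn (fun t => r * s₁ t + (1 - r) * s₂ t) (Set.Ici 0) := by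
    apply antitoneOn_of_deriv_nonpos (convex_Ici 0) hcm
    · intro t ht
      rw [interior_Ici] at ht
      exact (hm t (le_of_lt ht)).differentiableAt.differentiableWithinAt
    · intro t ht
      rw [interior_Ici] at ht
      rw [(hm t (le_of_lt ht)).deriv]
      exact hm_nonpos t (le_of_lt ht)
  -- nonnegativity of s₁, s₂
  have hnn : ∀ t ≥ (0:ℝ), 0 ≤ s₁ t ∧ 0 ≤ s₂ t := by
    intro t₀ ht₀
    have key : ∀ ε > (0:ℝ), ∀ t ∈ Set.Icc 0 t₀,
        0 < s₁ t + ε * (1 + t) ∧ 0 < s₂ t + ε * (1 + t) := by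
      intro ε hε
      by_contra hcon
      push_neg at hcon
      obtain ⟨t, htm, hbad⟩ := hcon
      set v₁ : ℝ → ℝ := fun t => s₁ t + ε * (1 + t) with hv₁
      set v₂ : ℝ → ℝ := fun t => s₂ t + ε * (1 + t) with hv₂
      have hlincont : Continuous (fun t : ℝ => ε * (1 + t)) :=
        continuous_const.mul (continuous_const.add continuous_id)
      have hvc1 : ContinuousOn v₁ (Set.Ici 0) := hc1.add hlincont.continuousOn
      have hvc2 : ContinuousOn v₂ (Set.Ici 0) := hc2.add hlincont.continuousOn
      set S : Set ℝ := {t ∈ Set.Icc 0 t₀ | v₁ t ≤ 0 ∨ v₂ t ≤ 0} with hS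
      have hSne : S.Nonempty := by
        refine ⟨t, htm, ?_⟩
        by_cases h : v₁ t ≤ 0
        · exact Or.inl h
        · push_neg at h
          exact Or.inr (hbad h)
      have hScl : IsClosed S := by
        have e : S = (Set.Icc 0 t₀ ∩ v₁ ⁻¹' Set.Iic 0) ∪ (Set.Icc 0 t₀ ∩ v₂ ⁻¹' Set.Iic 0) := by
          ext x
          simp only [hS, Set.mem_sep_iff, Set.mem_union, Set.mem_inter_iff, Set.mem_preimage,
            Set.mem_Iic]
          tauto
        rw [e]
        exact ((hvc1.mono (fun x (hx : x ∈ Set.Icc 0 t₀) =>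
            hx.1)).preimage_isClosed_of_isClosed isClosed_Icc isClosed_Iic).union
          ((hvc2.mono (fun x (hx : x ∈ Set.Icc 0 t₀) =>
            hx.1)).preimage_isClosed_of_isClosed isClosed_Icc isClosed_Iic)
      have hSbdd : BddBelow S := ⟨0, fun x hx => hx.1.1⟩
      have hTS : sInf S ∈ S := hScl.csInf_mem hSne hSbdd
      set T := sInf S with hT
      have hT0 : 0 ≤ T := hTS.1.1
      have hTt₀ : T ≤ t₀ := hTS.1.2
      have hv10 : 0 < v₁ 0 := by
        simp only [hv₁]
        have := hinit.1
        nlinarith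
      have hv20 : 0 < v₂ 0 := by
        simp only [hv₂]
        have := hinit.2
        nlinarith
      have hTpos : 0 < T := by
        rcases lt_or_eq_of_le hT0 with h | h
        · exact h
        · exfalso
          rcases hTS.2 with h1 | h1 <;> rw [← h] at h1 <;> linarith
      -- positivity before T
      have hbefore : ∀ x ∈ Set.Ico (0:ℝ) T, 0 < v₁ x ∧ 0 < v₂ x := by
        intro x hx
        by_contra hcx
        have hxS : x ∈ S := by
          refine ⟨⟨hx.1, le_trans (le_of_lt hx.2) hTt₀⟩, ?_⟩
          push_neg at hcx
          by_cases h : v₁ x ≤ 0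
          · exact Or.inl h
          · push_neg at h
            exact Or.inr (hcx h)
        exact absurd (csInf_le hSbdd hxS) (not_le.mpr hx.2)
      -- values at T are nonnegative (limit from the left)
      have hIoo : Set.Ioo (0:ℝ) T ∈ 𝓝[<] T := Ioo_mem_nhdsLT_of_mem ⟨hTpos, le_refl T⟩
      have hlin : HasDerivAt (fun t : ℝ => ε * (1 + t)) ε T := by
        simpa using ((hasDerivAt_id T).const_add (1:ℝ)).const_mul ε
      have hvd1 : HasDerivAt v₁
          (a T / r * (μ (sst T) * (sst T - s₁ T)) + d / r * (s₂ T - s₁ T) + ε) T :=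
        (hode1 T hT0).add hlin
      have hvd2 : HasDerivAt v₂
          ((1 - a T) / (1 - r) * (μ (sst T) * (sst T - s₂ T)) + d / (1 - r) * (s₁ T - s₂ T) + ε)
          T := (hode2 T hT0).add hlin
      have hlim1 : 0 ≤ v₁ T := by
        refine ge_of_tendsto
          ((hvd1.continuousAt.continuousWithinAt : ContinuousWithinAt v₁ (Set.Iio T) T).tendsto) ?_
        filter_upwards [hIoo] with x hx
        exact le_of_lt (hbefore x ⟨le_of_lt hx.1, hx.2⟩).1
      have hlim2 : 0 ≤ v₂ T := by
        refine ge_of_tendsto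
          ((hvd2.continuousAt.continuousWithinAt : ContinuousWithinAt v₂ (Set.Iio T) T).tendsto) ?_
        filter_upwards [hIoo] with x hx
        exact le_of_lt (hbefore x ⟨le_of_lt hx.1, hx.2⟩).2
      have hμT := hμ T hT0
      have hsstT := (hsst T hT0).1
      have haT := ha T hT0
      rcases hTS.2 with hcase | hcase
      · -- v₁ T = 0
        have hv1T : v₁ T = 0 := le_antisymm hcase hlim1
        have hs1T : s₁ T = -(ε * (1 + T)) := by
          have : s₁ T + ε * (1 + T) = 0 := hv1T
          linarith
        have hs1neg : s₁ T < 0 := by nlinarith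
        have h21 : s₁ T ≤ s₂ T := by
          have e1 : s₁ T + ε * (1 + T) = 0 := hv1T
          have e2 : 0 ≤ s₂ T + ε * (1 + T) := hlim2
          linarith
        have hder_pos : 0 < a T / r * (μ (sst T) * (sst T - s₁ T)) + d / r * (s₂ T - s₁ T) + ε := by
          have t1 : 0 ≤ a T / r * (μ (sst T) * (sst T - s₁ T)) := by
            apply mul_nonneg (div_nonneg haT.1 (le_of_lt hr0))
            apply mul_nonneg hμT
            linarith
          have t2 : 0 ≤ d / r * (s₂ T - s₁ T) := by
            apply mul_nonneg (div_nonneg hd (le_of_lt hr0))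
            linarith
          linarith
        exact aux_left_pos v₁ T _ hTpos hvd1 hder_pos hv1T
          (fun x hx => (hbefore x hx).1)
      · -- v₂ T = 0
        have hv2T : v₂ T = 0 := le_antisymm hcase hlim2
        have hs2T : s₂ T = -(ε * (1 + T)) := by
          have : s₂ T + ε * (1 + T) = 0 := hv2T
          linarith
        have hs2neg : s₂ T < 0 := by nlinarith
        have h12 : s₂ T ≤ s₁ T := by
          have e1 : s₂ T + ε * (1 + T) = 0 := hv2T
          have e2 : 0 ≤ s₁ T + ε * (1 + T) := hlim1
          linarith
        have hder_pos : 0 < (1 - a T) / (1 - r) * (μ (sst T) * (sst T - s₂ T))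
            + d / (1 - r) * (s₁ T - s₂ T) + ε := by
          have t1 : 0 ≤ (1 - a T) / (1 - r) * (μ (sst T) * (sst T - s₂ T)) := by
            apply mul_nonneg (div_nonneg (by linarith [haT.2]) (le_of_lt hr1'))
            apply mul_nonneg hμT
            linarith
          have t2 : 0 ≤ d / (1 - r) * (s₁ T - s₂ T) := by
            apply mul_nonneg (div_nonneg hd (le_of_lt hr1'))
            linarith
          linarith
        exact aux_left_pos v₂ T _ hTpos hvd2 hder_pos hv2T
          (fun x hx => (hbefore x hx).2)
    constructor
    · by_contra h
      push_neg at h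
      have h1t : (0:ℝ) < 1 + t₀ := by linarith
      have hε : 0 < -s₁ t₀ / (2 * (1 + t₀)) := div_pos (by linarith) (by linarith)
      have heq : -s₁ t₀ / (2 * (1 + t₀)) * (1 + t₀) = -s₁ t₀ / 2 := by
        field_simp
      have := (key _ hε t₀ ⟨ht₀, le_refl _⟩).1
      nlinarith
    · by_contra h
      push_neg at h
      have h1t : (0:ℝ) < 1 + t₀ := by linarith
      have hε : 0 < -s₂ t₀ / (2 * (1 + t₀)) := div_pos (by linarith) (by linarith)
      have heq : -s₂ t₀ / (2 * (1 + t₀)) * (1 + t₀) = -s₂ t₀ / 2 := by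
        field_simp
      have := (key _ hε t₀ ⟨ht₀, le_refl _⟩).2
      nlinarith
  -- conclude
  refine ⟨hanti, fun t ht => hanti Set.self_mem_Ici (Set.mem_Ici.mpr ht) ht, ?_⟩
  refine ⟨(r * s₁ 0 + (1 - r) * s₂ 0) * (1 / r + 1 / (1 - r)), fun t ht => ?_⟩
  obtain ⟨h1, h2⟩ := hnn t ht
  have hmle : r * s₁ t + (1 - r) * s₂ t ≤ r * s₁ 0 + (1 - r) * s₂ 0 :=
    hanti Set.self_mem_Ici (Set.mem_Ici.mpr ht) ht
  have hm0 : 0 ≤ r * s₁ 0 + (1 - r) * s₂ 0 := by nlinarith [hinit.1, hinit.2]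
  have hrr : (0:ℝ) < 1 / r + 1 / (1 - r) := by positivity
  constructor
  · rw [abs_of_nonneg h1]
    have h1r : 1 ≤ r * (1 / r + 1 / (1 - r)) := by
      rw [mul_add, mul_one_div, div_self (ne_of_gt hr0)]
      have : 0 ≤ r * (1 / (1 - r)) := by positivity
      linarith
    calc s₁ t ≤ (r * s₁ t + (1 - r) * s₂ t) / r := by
          rw [le_div_iff₀ hr0]
          nlinarith
      _ ≤ (r * s₁ 0 + (1 - r) * s₂ 0) / r := by
          exact div_le_div_of_nonneg_right hmle hr0.le |>.trans_eq rfl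
      _ ≤ (r * s₁ 0 + (1 - r) * s₂ 0) * (1 / r + 1 / (1 - r)) := by
          rw [div_eq_mul_one_div]
          apply mul_le_mul_of_nonneg_left _ hm0
          have : 0 < 1 / (1 - r) := by positivity
          linarith
  · rw [abs_of_nonneg h2]
    calc s₂ t ≤ (r * s₁ t + (1 - r) * s₂ t) / (1 - r) := by
          rw [le_div_iff₀ hr1']
          nlinarith
      _ ≤ (r * s₁ 0 + (1 - r) * s₂ 0) / (1 - r) := by
          exact div_le_div_of_nonneg_right hmle hr1'.le |>.trans_eq rfl
      _ ≤ (r * s₁ 0 + (1 - r) * s₂ 0) * (1 / r + 1 / (1 - r)) := by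
          rw [div_eq_mul_one_div]
          apply mul_le_mul_of_nonneg_left _ hm0
          have : 0 < 1 / r := by positivity
          linarith
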